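/- Under the feature-representation assumption with amplification factor κ = γ'/γ (where γ ≤ γ' < 1), the projected upper-level Bellman operator F'_ω = Φ† ∘ F_ω ∘ Φ is a (κγ^T)-contraction with respect to the norm ‖β‖_Φ := ‖Φβ‖_∞ on ℝ^M: ‖F'_ω(β) − F'_ω(β')‖_Φ ≤ κγ^T ‖β − β'‖_Φ. Consequently F'_ω has a unique fixed point. -/

import Mathlib

/-- The projected upper-level Bellman operator `F'_ω = Φ† ∘ F_ω ∘ Φ` is a
`(κγ^T)`-contraction in the norm `‖β‖_Φ = ‖Φβ‖_∞`, and consequently has a unique fixed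
point. Here `F_ω` is a `γ^T`-contraction in the sup norm, `Φ†Φ = I`, and `ΦΦ†` has
amplification factor `κ`. -/
theorem projected_bellman_contraction
    (N M T : ℕ) (hT : 1 ≤ T) (κ γ : ℝ) (hκ : 1 ≤ κ)
    (hγ0 : 0 ≤ γ) (hγ1 : γ < 1) (hκγ : κ * γ ^ T < 1)
    (Φ : Matrix (Fin N) (Fin M) ℝ) (Φdag : Matrix (Fin M) (Fin N) ℝ)
    (hinv : Φdag * Φ = 1)
    (hamp : ∀ J J' : Fin N → ℝ,
      ‖Φ.mulVec (Φdag.mulVec J) - Φ.mulVec (Φdag.mulVec J')‖ ≤ κ * ‖J - J'‖)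
    (F : (Fin N → ℝ) → (Fin N → ℝ))
    (hF : ∀ V V' : Fin N → ℝ, ‖F V - F V'‖ ≤ γ ^ T * ‖V - V'‖) :
    (∀ β β' : Fin M → ℝ,
      ‖Φ.mulVec (Φdag.mulVec (F (Φ.mulVec β))) -
          Φ.mulVec (Φdag.mulVec (F (Φ.mulVec β')))‖ ≤
        κ * γ ^ T * ‖Φ.mulVec β - Φ.mulVec β'‖) ∧
      ∃! β : Fin M → ℝ, Φdag.mulVec (F (Φ.mulVec β)) = β := by
  have hκ0 : (0:ℝ) ≤ κ := le_trans zero_le_one hκ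
  have hκγ0 : 0 ≤ κ * γ ^ T := by positivity
  -- contraction estimate for H J = Φ Φ† (F J)
  have hH : ∀ J J' : Fin N → ℝ,
      ‖Φ.mulVec (Φdag.mulVec (F J)) - Φ.mulVec (Φdag.mulVec (F J'))‖ ≤
        κ * γ ^ T * ‖J - J'‖ := by
    intro J J'
    calc ‖Φ.mulVec (Φdag.mulVec (F J)) - Φ.mulVec (Φdag.mulVec (F J'))‖
        ≤ κ * ‖F J - F J'‖ := hamp _ _
      _ ≤ κ * (γ ^ T * ‖J - J'‖) := by
          have := hF J J'
          nlinarith [norm_nonneg (F J - F J')]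
      _ = κ * γ ^ T * ‖J - J'‖ := by ring
  refine ⟨fun β β' => hH _ _, ?_⟩
  set H : (Fin N → ℝ) → (Fin N → ℝ) := fun J => Φ.mulVec (Φdag.mulVec (F J)) with hHdef
  have hc : ContractingWith ⟨κ * γ ^ T, hκγ0⟩ H := by
    constructor
    · exact_mod_cast hκγ
    · apply LipschitzWith.of_dist_le_mul
      intro x y
      simp only [hHdef, dist_eq_norm]
      exact hH x y
  have hinj : ∀ β : Fin M → ℝ, Φdag.mulVec (Φ.mulVec β) = β := by
    intro β
    rw [Matrix.mulVec_mulVec, hinv, Matrix.one_mulVec]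
  let J := hc.fixedPoint H
  have hJ : H J = J := hc.fixedPoint_isFixedPt
  refine ⟨Φdag.mulVec (F J), ?_, ?_⟩
  · show Φdag.mulVec (F (Φ.mulVec (Φdag.mulVec (F J)))) = Φdag.mulVec (F J)
    have hΦ : Φ.mulVec (Φdag.mulVec (F J)) = J := hJ
    rw [hΦ]
  · intro β hβ
    have hfix : H (Φ.mulVec β) = Φ.mulVec β := by
      simp only [hHdef, hβ]
    have : Φ.mulVec β = J := hc.fixedPoint_unique hfix
    rw [← this]
    exact hβ.symm
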